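/- (Proposition 4.3(2)) For any normed BPA system G = (V, Act, R) and all α, γ ∈ V*: αγ ~ γ in L_G if and only if α ∈ (R_γ)*, where R_γ = {X ∈ V | Xγ ~ γ}. -/

import Mathlib

/-! Common definitions: labelled transition systems, branching bisimulation,
branching bisimilarity, silent states, class-change norm, BPA systems,
right-to-left finite transducers. -/

/-- A τ-path `t = t₀ →τ t₁ →τ ⋯ →τ t_k` in which every state after `t₀`
is related to `s` by `B`. -/
inductive TauSeq {S Act : Type} (tr : S → Act → S → Prop) (τ : Act)
    (B : S → S → Prop) (s : S) : S → S → Prop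
  | refl (t : S) : TauSeq tr τ B s t t
  | step {t t' t'' : S} : tr t τ t' → B s t' → TauSeq tr τ B s t' t'' →
      TauSeq tr τ B s t t''

/-- `B` is a branching bisimulation in the LTS given by `tr` with silent action `τ`. -/
def IsBranchingBisim {S Act : Type} (tr : S → Act → S → Prop) (τ : Act)
    (B : S → S → Prop) : Prop :=
  ∀ s t, B s t →
    (∀ a s', tr s a s' →
      ((a = τ ∧ B s' t) ∨
        ∃ tk t', TauSeq tr τ B s t tk ∧ tr tk a t' ∧ B s' t')) ∧
    (∀ a t', tr t a t' →
      ((a = τ ∧ B s t') ∨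
        ∃ sk s', TauSeq tr τ (fun u v => B v u) t s sk ∧ tr sk a s' ∧ B s' t'))

/-- Branching bisimilarity: `s ~ t` iff some branching bisimulation contains `(s,t)`. -/
def BBisim {S Act : Type} (tr : S → Act → S → Prop) (τ : Act) (s t : S) : Prop :=
  ∃ B, IsBranchingBisim tr τ B ∧ B s t

/-- `Steps tr s w t`: there is a path from `s` to `t` labelled by the word `w`. -/
inductive Steps {S Act : Type} (tr : S → Act → S → Prop) : S → List Act → S → Prop
  | refl (s : S) : Steps tr s [] s
  | step {s : S} {a : Act} {s' : S} {w : List Act} {t : S} :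
      tr s a s' → Steps tr s' w t → Steps tr s (a :: w) t

/-- A state is silent if only τ-labelled words can be performed from it. -/
def SilentState {S Act : Type} (tr : S → Act → S → Prop) (τ : Act) (s : S) : Prop :=
  ∀ w s', Steps tr s w s' → ∀ a ∈ w, a = τ

/-- A τ-path in which no transition is class-changing (each step stays in the same
`~`-class). -/
inductive TauNC {S Act : Type} (tr : S → Act → S → Prop) (τ : Act) : S → S → Prop
  | refl (t : S) : TauNC tr τ t t
  | step {t t' t'' : S} : tr t τ t' → BBisim tr τ t t' → TauNC tr τ t' t'' →
      TauNC tr τ t t''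

/-- `CCPath tr τ s n t`: there is a path from `s` to `t` containing exactly `n`
class-changing transitions. -/
inductive CCPath {S Act : Type} (tr : S → Act → S → Prop) (τ : Act) : S → ℕ → S → Prop
  | refl (s : S) : CCPath tr τ s 0 s
  | stepEq {s : S} {a : Act} {s' : S} {n : ℕ} {t : S} :
      tr s a s' → BBisim tr τ s s' → CCPath tr τ s' n t → CCPath tr τ s n t
  | stepNe {s : S} {a : Act} {s' : S} {n : ℕ} {t : S} :
      tr s a s' → ¬ BBisim tr τ s s' → CCPath tr τ s' n t → CCPath tr τ s (n + 1) t

/-- The class-change norm: the least number of class-changing transitions on a path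
to a silent state; `⊤` (ω) if no silent state is reachable. -/
noncomputable def ccNorm {S Act : Type} (tr : S → Act → S → Prop) (τ : Act) (s : S) : ℕ∞ :=
  sInf {n : ℕ∞ | ∃ ℓ : ℕ, n = (ℓ : ℕ∞) ∧ ∃ t, CCPath tr τ s ℓ t ∧ SilentState tr τ t}

/-- A BPA system: a finite set of rules `A →a α` (a context-free grammar in
Greibach normal form, no starting variable). -/
structure BPA (V Act : Type) where
  rules : Finset (V × Act × List V)

/-- The transition relation of the LTS `L_G` associated with a BPA system `G`:
`Aβ →a γβ` whenever `A →a γ` is a rule. -/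
def BPA.tr {V Act : Type} (G : BPA V Act) : List V → Act → List V → Prop :=
  fun s a t => ∃ (A : V) (γ β : List V), (A, a, γ) ∈ G.rules ∧ s = A :: β ∧ t = γ ++ β

/-- The (standard, syntactic) norm of a process: the length of a shortest word
leading to the empty process; `⊤` (ω) if there is none. -/
noncomputable def BPA.norm {V Act : Type} (G : BPA V Act) (α : List V) : ℕ∞ :=
  sInf {n : ℕ∞ | ∃ w : List Act, n = (w.length : ℕ∞) ∧ Steps G.tr α w []}

/-- A BPA system is normed if every variable has a finite norm. -/
def BPA.Normed {V Act : Type} (G : BPA V Act) : Prop :=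
  ∀ A : V, G.norm [A] ≠ ⊤

/-- The transition relation of `L_{G,R}`: as `L_G`, but all outgoing transitions of
states in `R*` are removed. -/
def BPA.trR {V Act : Type} (G : BPA V Act) (R : Set V) : List V → Act → List V → Prop :=
  fun s a t => G.tr s a t ∧ ¬ (∀ X ∈ s, X ∈ R)

/-- `R_γ`: the set of variables redundant w.r.t. `γ`, i.e. those `X` with `Xγ ~ γ`. -/
def RedSet {V Act : Type} (G : BPA V Act) (τ : Act) (γ : List V) : Set V :=
  {X : V | BBisim G.tr τ (X :: γ) γ}

/-- `α` is a redundancy-free prefix of `αγ`: it cannot be written as `δXβ` with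
`Xβγ ~ βγ`. -/
def RedFreePrefix {V Act : Type} (G : BPA V Act) (τ : Act) (α γ : List V) : Prop :=
  ¬ ∃ (δ : List V) (X : V) (β : List V),
      α = δ ++ X :: β ∧ BBisim G.tr τ (X :: (β ++ γ)) (β ++ γ)

/-- A finite-state transducer reading (and writing) from right to left. -/
structure Transducer (Q V : Type) where
  delta : Q → V → Q × List V
  q0 : Q

/-- Running the transducer on an input string, right to left:
`T.run α q = (q', β)` means `q' ⇐α|β= q`. -/
def Transducer.run {Q V : Type} (T : Transducer Q V) : List V → Q → Q × List V
  | [], q => (q, [])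
  | A :: α, q =>
      let p := T.run α q
      ((T.delta p.1 A).1, (T.delta p.1 A).2 ++ p.2)

/-- `T_q(α)`: the output of `T` on input `α`, started in state `q`. -/
def Transducer.out {Q V : Type} (T : Transducer Q V) (q : Q) (α : List V) : List V :=
  (T.run α q).2

/-- `q`-normal forms: `ε ∈ NF_q`, and `αA ∈ NF_q` iff `A` is a `q`-prime and
`α` is a `q'`-normal form where `q' ⇐A|A= q`. -/
inductive Transducer.NF {Q V : Type} (T : Transducer Q V) : Q → List V → Prop
  | nil (q : Q) : Transducer.NF T q []
  | snoc {q : Q} {A : V} {α : List V} :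
      (T.delta q A).2 = [A] → Transducer.NF T (T.delta q A).1 α →
      Transducer.NF T q (α ++ [A])

/-- A normal-form-computing (nfc) transducer: each `T_q(A)` is a `q`-normal form,
and `q' ⇐A|γ= q` implies `q' ⇐γ|γ= q`. -/
def Transducer.IsNFC {Q V : Type} (T : Transducer Q V) : Prop :=
  ∀ (q : Q) (A : V),
    Transducer.NF T q (T.delta q A).2 ∧ T.run (T.delta q A).2 q = T.delta q A

/-- A τ-path in `L_G` along which the `T_q`-output stays constant. -/
inductive ConstTauSeq {Q V Act : Type} (tr : List V → Act → List V → Prop) (τ : Act)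
    (T : Transducer Q V) (q : Q) : List V → List V → Prop
  | refl (α : List V) : ConstTauSeq tr τ T q α α
  | step {α α' α'' : List V} : tr α τ α' → T.out q α' = T.out q α →
      ConstTauSeq tr τ T q α' α'' → ConstTauSeq tr τ T q α α''

/-- The long move `α ⇒a_q β`. -/
def BigStep {Q V Act : Type} (G : BPA V Act) (τ : Act) (T : Transducer Q V) (q : Q)
    (α : List V) (a : Act) (β : List V) : Prop :=
  (a = τ ∧ β = T.out q α) ∨
  ∃ αk β', ConstTauSeq G.tr τ T q α αk ∧ G.tr αk a β' ∧ β = T.out q β'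

/-- The equivalence `α₁ ≈_q α₂`: the same long moves are available. -/
def TApprox {Q V Act : Type} (G : BPA V Act) (τ : Act) (T : Transducer Q V) (q : Q)
    (α₁ α₂ : List V) : Prop :=
  ∀ a β, BigStep G τ T q α₁ a β ↔ BigStep G τ T q α₂ a β

/-- Consistency of an nfc-transducer with a BPA system (Definition 4.1). -/
def ConsistentWith {Q V Act : Type} (T : Transducer Q V) (G : BPA V Act) (τ : Act) : Prop :=
  (∀ A : V, T.out T.q0 [A] = [] → TApprox G τ T T.q0 [A] []) ∧
  (∀ (q : Q) (A : V), T.out q [A] ≠ [] → TApprox G τ T q [A] (T.out q [A])) ∧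
  (∀ (q : Q) (A C : V), T.out q [A, C] = [C] → T.out q [C] = [C] →
    TApprox G τ T q [A, C] [C])

namespace BBAux

open Classical

variable {S Act : Type}

/-! ### Relation combinators and the two halves of branching bisimulation -/

def Flip (B : S → S → Prop) : S → S → Prop := fun u v => B v u

def Comp (B1 B2 : S → S → Prop) : S → S → Prop := fun x y => ∃ z, B1 x z ∧ B2 z y

/-- The forward half of the branching-bisimulation condition. -/
def FwdOK (tr : S → Act → S → Prop) (τ : Act) (B : S → S → Prop) : Prop :=
  ∀ s t, B s t → ∀ a s', tr s a s' →
    ((a = τ ∧ B s' t) ∨ ∃ tk t', TauSeq tr τ B s t tk ∧ tr tk a t' ∧ B s' t')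

theorem isBB_iff {tr : S → Act → S → Prop} {τ : Act} {B : S → S → Prop} :
    IsBranchingBisim tr τ B ↔ (FwdOK tr τ B ∧ FwdOK tr τ (Flip B)) := by
  constructor
  · intro h
    exact ⟨fun s t hb a s' htr => (h s t hb).1 a s' htr,
           fun t s hb a t' htr => (h s t hb).2 a t' htr⟩
  · intro h s t hb
    exact ⟨fun a s' htr => h.1 s t hb a s' htr, fun a t' htr => h.2 t s hb a t' htr⟩

variable {tr : S → Act → S → Prop} {τ : Act}

theorem TauSeq.mono {B B' : S → S → Prop} (hBB : ∀ x y, B x y → B' x y)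
    {s t u : S} (h : TauSeq tr τ B s t u) : TauSeq tr τ B' s t u := by
  induction h with
  | refl t => exact TauSeq.refl t
  | step h1 h2 _ ih => exact TauSeq.step h1 (hBB _ _ h2) ih

theorem TauSeq.trans' {B : S → S → Prop} {s t u v : S}
    (h1 : TauSeq tr τ B s t u) (h2 : TauSeq tr τ B s u v) : TauSeq tr τ B s t v := by
  induction h1 with
  | refl => exact h2
  | step ha hb _ ih => exact TauSeq.step ha hb (ih h2)

theorem TauSeq.last {B : S → S → Prop} {s t u : S} (h : TauSeq tr τ B s t u) :
    u = t ∨ ∃ j, TauSeq tr τ B s t j ∧ tr j τ u ∧ B s u := by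
  induction h with
  | refl => exact Or.inl rfl
  | @step t t' t'' h1 h2 h3 ih =>
    rcases ih with rfl | ⟨j, hj, hju, hbu⟩
    · exact Or.inr ⟨t, TauSeq.refl t, h1, h2⟩
    · exact Or.inr ⟨j, TauSeq.step h1 h2 hj, hju, hbu⟩

theorem TauSeq.b_last {B : S → S → Prop} {s t u : S} (h : TauSeq tr τ B s t u)
    (hst : B s t) : B s u := by
  induction h with
  | refl => exact hst
  | step _ h2 _ ih => exact ih h2

theorem tauseq_comp_left {B1 B2 : S → S → Prop} {s t u uj : S}
    (h : TauSeq tr τ B2 t u uj) (hst : B1 s t) : TauSeq tr τ (Comp B1 B2) s u uj := by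
  induction h with
  | refl => exact TauSeq.refl _
  | step h1 h2 _ ih => exact TauSeq.step h1 ⟨t, hst, h2⟩ ih

theorem comp_tau {B1 B2 : S → S → Prop} (hF2 : FwdOK tr τ B2)
    {s t tk : S} (hseq : TauSeq tr τ B1 s t tk) :
    ∀ u, B1 s t → B2 t u → ∃ uk, TauSeq tr τ (Comp B1 B2) s u uk ∧ B2 tk uk := by
  induction hseq with
  | refl t => exact fun u _ h2 => ⟨u, TauSeq.refl u, h2⟩
  | @step t t₁ tk h1 hb1 hrest ih =>
    intro u hb1t h2
    rcases hF2 t u h2 τ t₁ h1 with ⟨_, h2'⟩ | ⟨uj, u', seq2, hstep, hb'⟩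
    · exact ih u hb1 h2'
    · obtain ⟨uk, seq3, hend⟩ := ih u' hb1 hb'
      refine ⟨uk, ?_, hend⟩
      refine TauSeq.trans' ?_ seq3
      refine TauSeq.trans' (tauseq_comp_left seq2 hb1t) ?_
      exact TauSeq.step hstep ⟨t₁, hb1, hb'⟩ (TauSeq.refl _)

theorem fwd_comp {B1 B2 : S → S → Prop} (hF1 : FwdOK tr τ B1) (hF2 : FwdOK tr τ B2) :
    FwdOK tr τ (Comp B1 B2) := by
  rintro s u ⟨t, h1, h2⟩ a s' htr
  rcases hF1 s t h1 a s' htr with ⟨ha, hb⟩ | ⟨tk, t', seq1, htk, ht'⟩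
  · exact Or.inl ⟨ha, t, hb, h2⟩
  · obtain ⟨uk, sequ, h2k⟩ := comp_tau hF2 seq1 u h1 h2
    rcases hF2 tk uk h2k a t' htk with ⟨ha, h2'⟩ | ⟨uk', u'', sequ2, hstep, h2''⟩
    · rcases TauSeq.last sequ with rfl | ⟨uj, sequ', hstepj, _⟩
      · exact Or.inl ⟨ha, t', ht', h2'⟩
      · exact Or.inr ⟨uj, uk, sequ', ha ▸ hstepj, t', ht', h2'⟩
    · refine Or.inr ⟨uk', u'', ?_, hstep, t', ht', h2''⟩
      refine TauSeq.trans' sequ ?_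
      exact tauseq_comp_left sequ2 (TauSeq.b_last seq1 h1)

theorem fwd_of_iff {B B' : S → S → Prop} (hiff : ∀ x y, B x y ↔ B' x y)
    (h : FwdOK tr τ B) : FwdOK tr τ B' := by
  intro s t hb a s' htr
  rcases h s t ((hiff s t).mpr hb) a s' htr with ⟨ha, hb'⟩ | ⟨tk, t', seq, htk, ht'⟩
  · exact Or.inl ⟨ha, (hiff _ _).mp hb'⟩
  · exact Or.inr ⟨tk, t', TauSeq.mono (fun x y => (hiff x y).mp) seq, htk, (hiff _ _).mp ht'⟩

theorem bb_refl (s : S) : BBisim tr τ s s := by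
  refine ⟨Eq, ?_, rfl⟩
  rw [isBB_iff]
  constructor
  · rintro s t rfl a s' htr
    exact Or.inr ⟨s, s', TauSeq.refl s, htr, rfl⟩
  · rintro s t hst a s' htr
    obtain rfl : t = s := hst
    exact Or.inr ⟨_, s', TauSeq.refl _, htr, rfl⟩

theorem bb_symm {s t : S} (h : BBisim tr τ s t) : BBisim tr τ t s := by
  obtain ⟨B, hB, hst⟩ := h
  rw [isBB_iff] at hB
  refine ⟨Flip B, ?_, hst⟩
  rw [isBB_iff]
  exact ⟨hB.2, fwd_of_iff (fun x y => Iff.rfl) hB.1⟩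

theorem bb_trans {s t u : S} (h1 : BBisim tr τ s t) (h2 : BBisim tr τ t u) :
    BBisim tr τ s u := by
  obtain ⟨B1, hB1, hst⟩ := h1
  obtain ⟨B2, hB2, htu⟩ := h2
  rw [isBB_iff] at hB1 hB2
  refine ⟨Comp B1 B2, ?_, t, hst, htu⟩
  rw [isBB_iff]
  refine ⟨fwd_comp hB1.1 hB2.1, ?_⟩
  refine fwd_of_iff (B := Comp (Flip B2) (Flip B1)) ?_ (fwd_comp hB2.2 hB1.2)
  intro x y
  exact ⟨fun ⟨z, hz1, hz2⟩ => ⟨z, hz2, hz1⟩, fun ⟨z, hz1, hz2⟩ => ⟨z, hz2, hz1⟩⟩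

/-! ### Steps and silent states -/

theorem Steps.single {s t : S} {a : Act} (h : tr s a t) : Steps tr s [a] t :=
  Steps.step h (Steps.refl t)

theorem Steps.trans' {s t u : S} {w w' : List Act}
    (h1 : Steps tr s w t) (h2 : Steps tr t w' u) : Steps tr s (w ++ w') u := by
  induction h1 with
  | refl => exact h2
  | step h _ ih => exact Steps.step h (ih h2)

theorem silent_step {s s' : S} {a : Act} (hs : SilentState tr τ s) (h : tr s a s') :
    a = τ ∧ SilentState tr τ s' := by
  constructor
  · exact hs [a] s' (Steps.single h) a (List.mem_singleton_self a)
  · intro w u hw b hb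
    exact hs (a :: w) u (Steps.step h hw) b (List.mem_cons_of_mem a hb)

theorem silent_steps {s u : S} {w : List Act} (hw : Steps tr s w u)
    (hs : SilentState tr τ s) : SilentState tr τ u := by
  induction hw with
  | refl => exact hs
  | step h _ ih => exact ih (silent_step hs h).2

theorem tauseq_to_steps {B : S → S → Prop} {s t u : S} (h : TauSeq tr τ B s t u) :
    ∃ w, Steps tr t w u := by
  induction h with
  | refl t => exact ⟨[], Steps.refl t⟩
  | step h1 _ _ ih =>
    obtain ⟨w, hw⟩ := ih
    exact ⟨τ :: w, Steps.step h1 hw⟩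

theorem silent_of_bb_aux {t : S} {w : List Act} {t' : S} (hsteps : Steps tr t w t') :
    ∀ (s : S) (B : S → S → Prop), IsBranchingBisim tr τ B → B s t → SilentState tr τ s →
      ∀ a ∈ w, a = τ := by
  induction hsteps with
  | refl => intro _ _ _ _ _ a ha; exact absurd ha List.not_mem_nil
  | @step t a t₁ w₁ t' htr _ ih =>
    intro s B hB hb hsil b hb'
    rcases (hB s t hb).2 a t₁ htr with ⟨ha, hb1⟩ | ⟨sk, s', seq, hstep, hb1⟩
    · rcases List.mem_cons.mp hb' with rfl | hmem
      · exact ha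
      · exact ih s B hB hb1 hsil b hmem
    · obtain ⟨w₀, hw₀⟩ := tauseq_to_steps seq
      have hsk : SilentState tr τ sk := silent_steps hw₀ hsil
      have has' := silent_step hsk hstep
      rcases List.mem_cons.mp hb' with rfl | hmem
      · exact has'.1
      · exact ih s' B hB hb1 has'.2 b hmem

theorem silent_of_bb {s t : S} (h : BBisim tr τ s t) (hs : SilentState tr τ s) :
    SilentState tr τ t := by
  obtain ⟨B, hB, hst⟩ := h
  intro w t' hw
  exact silent_of_bb_aux hw s B hB hst hs

theorem silent_bb {s t : S} (hs : SilentState tr τ s) (ht : SilentState tr τ t) :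
    BBisim tr τ s t := by
  refine ⟨fun x y => SilentState tr τ x ∧ SilentState tr τ y, ?_, hs, ht⟩
  rw [isBB_iff]
  constructor
  · rintro x y ⟨hx, hy⟩ a x' htr
    obtain ⟨ha, hx'⟩ := silent_step hx htr
    exact Or.inl ⟨ha, hx', hy⟩
  · rintro x y ⟨hy, hx⟩ a x' htr
    obtain ⟨ha, hx'⟩ := silent_step hx htr
    exact Or.inl ⟨ha, hy, hx'⟩

/-! ### CCPath lemmas -/

theorem ccpath_zero_bb' {s : S} {n : ℕ} {u : S} (h : CCPath tr τ s n u) :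
    n = 0 → BBisim tr τ s u := by
  induction h with
  | refl => intro _; exact bb_refl _
  | stepEq _ hb _ ih => intro hn; exact bb_trans hb (ih hn)
  | stepNe => intro hn; exact absurd hn (by omega)

theorem ccpath_zero_bb {s u : S} (h : CCPath tr τ s 0 u) : BBisim tr τ s u :=
  ccpath_zero_bb' h rfl

theorem ccpath_trans {s u v : S} {m n : ℕ} (h1 : CCPath tr τ s m u)
    (h2 : CCPath tr τ u n v) : CCPath tr τ s (m + n) v := by
  induction h1 with
  | refl => simpa using h2
  | stepEq h hb _ ih => exact CCPath.stepEq h hb (ih h2)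
  | @stepNe s a s' k t h hb _ ih =>
    have h3 : CCPath tr τ s' (k + n) v := ih h2
    have h4 := CCPath.stepNe h hb h3
    have : k + n + 1 = k + 1 + n := by omega
    rwa [this] at h4

theorem steps_to_ccpath {s u : S} {w : List Act} (h : Steps tr s w u) :
    ∃ ℓ, CCPath tr τ s ℓ u := by
  induction h with
  | refl s => exact ⟨0, CCPath.refl s⟩
  | @step s a s' w t htr _ ih =>
    obtain ⟨ℓ, hℓ⟩ := ih
    by_cases hb : BBisim tr τ s s'
    · exact ⟨ℓ, CCPath.stepEq htr hb hℓ⟩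
    · exact ⟨ℓ + 1, CCPath.stepNe htr hb hℓ⟩

theorem tauseq_ccpath {B : S → S → Prop} {s t tk : S} (hB : IsBranchingBisim tr τ B)
    (h : TauSeq tr τ B s t tk) (hst : B s t) : CCPath tr τ t 0 tk := by
  induction h with
  | refl t => exact CCPath.refl t
  | @step t t₁ tk h1 h2 _ ih =>
    refine CCPath.stepEq h1 ?_ (ih h2)
    exact bb_trans (bb_symm ⟨B, hB, hst⟩) ⟨B, hB, h2⟩

theorem ccpath_transfer {s : S} {ℓ : ℕ} {u : S} (h : CCPath tr τ s ℓ u)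
    (hu : SilentState tr τ u) :
    ∀ t, BBisim tr τ s t →
      ∃ m u', m ≤ ℓ ∧ CCPath tr τ t m u' ∧ SilentState tr τ u' := by
  induction h with
  | refl s => exact fun t ht => ⟨0, t, le_refl 0, CCPath.refl t, silent_of_bb ht hu⟩
  | @stepEq s a s' n v htr hb _ ih =>
    intro t ht
    exact ih hu t (bb_trans (bb_symm hb) ht)
  | @stepNe s a s' n v htr hnb _ ih =>
    intro t ht
    obtain ⟨B, hB, hBst⟩ := ht
    rcases (hB s t hBst).1 a s' htr with ⟨_, hb1⟩ | ⟨tk, t', seq, htk, hb'⟩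
    · exact absurd (bb_trans ⟨B, hB, hBst⟩ (bb_symm ⟨B, hB, hb1⟩)) hnb
    · have hpath : CCPath tr τ t 0 tk := tauseq_ccpath hB seq hBst
      obtain ⟨m, u', hm, p', si'⟩ := ih hu t' ⟨B, hB, hb'⟩
      by_cases hc : BBisim tr τ tk t'
      · refine ⟨0 + m, u', by omega, ccpath_trans hpath (CCPath.stepEq htk hc p'), si'⟩
      · refine ⟨0 + (m + 1), u', by omega,
          ccpath_trans hpath (CCPath.stepNe htk hc p'), si'⟩

/-! ### ccNorm lemmas -/

theorem ccNorm_le {s : S} {ℓ : ℕ} {u : S} (h : CCPath tr τ s ℓ u)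
    (hu : SilentState tr τ u) : ccNorm tr τ s ≤ (ℓ : ℕ∞) :=
  sInf_le ⟨ℓ, rfl, u, h, hu⟩

theorem ccNorm_congr {s t : S} (h : BBisim tr τ s t) : ccNorm tr τ s = ccNorm tr τ t := by
  have key : ∀ x y : S, BBisim tr τ x y → ccNorm tr τ x ≤ ccNorm tr τ y := by
    intro x y hxy
    apply le_sInf
    rintro b ⟨ℓ, rfl, u, p, si⟩
    obtain ⟨m, u', hm, p', si'⟩ := ccpath_transfer p si x (bb_symm hxy)
    exact le_trans (ccNorm_le p' si') (Nat.cast_le.mpr hm)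
  exact le_antisymm (key s t h) (key t s (bb_symm h))

theorem ccNorm_attained {s : S} (hex : ∃ ℓ u, CCPath tr τ s ℓ u ∧ SilentState tr τ u) :
    ∃ ℓ u, CCPath tr τ s ℓ u ∧ SilentState tr τ u ∧ ccNorm tr τ s = (ℓ : ℕ∞) := by
  classical
  set T : Set ℕ := {ℓ | ∃ u, CCPath tr τ s ℓ u ∧ SilentState tr τ u} with hT
  have hTne : T.Nonempty := by
    obtain ⟨ℓ, u, p, si⟩ := hex
    exact ⟨ℓ, u, p, si⟩
  obtain ⟨u, p, si⟩ := Nat.sInf_mem hTne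
  refine ⟨sInf T, u, p, si, ?_⟩
  refine le_antisymm (ccNorm_le p si) ?_
  apply le_sInf
  rintro b ⟨ℓ', rfl, u', p', si'⟩
  exact Nat.cast_le.mpr (Nat.sInf_le ⟨u', p', si'⟩)

end BBAux
namespace BBAux

/-! ### BPA-specific lemmas -/

variable {V Act : Type} {G : BPA V Act} {τ : Act}

theorem tr_shape {A : V} {β x' : List V} {a : Act} (h : G.tr (A :: β) a x') :
    ∃ ρ, (A, a, ρ) ∈ G.rules ∧ x' = ρ ++ β := by
  obtain ⟨A', ρ, β', hr, hs, ht⟩ := h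
  injection hs with h1 h2
  subst h1; subst h2
  exact ⟨ρ, hr, ht⟩

theorem tr_append {s t : List V} {a : Act} (h : G.tr s a t) (ρ : List V) :
    G.tr (s ++ ρ) a (t ++ ρ) := by
  obtain ⟨A, γ, β, hr, rfl, rfl⟩ := h
  exact ⟨A, γ, β ++ ρ, hr, by simp, by simp⟩

theorem steps_lift {s t : List V} {w : List Act} (h : Steps G.tr s w t) (ρ : List V) :
    Steps G.tr (s ++ ρ) w (t ++ ρ) := by
  induction h with
  | refl => exact Steps.refl _
  | step h1 _ ih => exact Steps.step (tr_append h1 ρ) ih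

theorem silent_nil : SilentState G.tr τ [] := by
  intro w s' h a ha
  cases h with
  | refl => exact absurd ha List.not_mem_nil
  | step htr _ =>
    obtain ⟨A, γ, β, _, hnil, _⟩ := htr
    exact absurd hnil (by simp)

theorem normed_reach (hG : G.Normed) : ∀ ζ : List V, ∃ w, Steps G.tr ζ w [] := by
  have hhead : ∀ A : V, ∃ w, Steps G.tr [A] w [] := by
    intro A
    by_contra hno
    push_neg at hno
    apply hG A
    show sInf _ = ⊤
    have hempty : {n : ℕ∞ | ∃ w : List Act, n = (w.length : ℕ∞) ∧ Steps G.tr [A] w []}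
        = ∅ := by
      ext n
      simp only [Set.mem_setOf_eq, Set.mem_empty_iff_false, iff_false, not_exists]
      rintro w ⟨_, hw⟩
      exact hno w hw
    rw [hempty, sInf_empty]
  intro ζ
  induction ζ with
  | nil => exact ⟨[], Steps.refl []⟩
  | cons A ζ' ih =>
    obtain ⟨w₁, hw₁⟩ := hhead A
    obtain ⟨w₂, hw₂⟩ := ih
    have h1 : Steps G.tr (A :: ζ') w₁ ζ' := by simpa using steps_lift hw₁ ζ'
    exact ⟨w₁ ++ w₂, Steps.trans' h1 hw₂⟩

theorem exists_ccpath_silent (hG : G.Normed) (s : List V) :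
    ∃ ℓ u, CCPath G.tr τ s ℓ u ∧ SilentState G.tr τ u := by
  obtain ⟨w, hw⟩ := normed_reach hG s
  obtain ⟨ℓ, hℓ⟩ := steps_to_ccpath (τ := τ) hw
  exact ⟨ℓ, [], hℓ, silent_nil⟩

theorem ccpath_decomp {s : List V} {n : ℕ} {t : List V} (h : CCPath G.tr τ s n t) :
    ∀ δ σ, s = δ ++ σ →
      (∃ k₁ k₂, k₁ + k₂ = n ∧ CCPath G.tr τ s k₁ σ ∧ CCPath G.tr τ σ k₂ t) ∨
      (∃ ζ, ζ ≠ [] ∧ t = ζ ++ σ) := by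
  induction h with
  | refl s =>
    intro δ σ hs
    cases δ with
    | nil =>
      simp only [List.nil_append] at hs
      subst hs
      exact Or.inl ⟨0, 0, rfl, CCPath.refl _, CCPath.refl _⟩
    | cons A δ₁ => exact Or.inr ⟨A :: δ₁, by simp, hs⟩
  | @stepEq s a s' n t htr hb hcc ih =>
    intro δ σ hs
    cases δ with
    | nil =>
      simp only [List.nil_append] at hs
      subst hs
      exact Or.inl ⟨0, n, by omega, CCPath.refl _, CCPath.stepEq htr hb hcc⟩
    | cons A δ₁ =>
      subst hs
      obtain ⟨ρ, _, rfl⟩ := tr_shape (by simpa using htr)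
      rcases ih (ρ ++ δ₁) σ (by simp) with ⟨k₁, k₂, hsum, p1, p2⟩ | hright
      · exact Or.inl ⟨k₁, k₂, hsum, CCPath.stepEq htr hb p1, p2⟩
      · exact Or.inr hright
  | @stepNe s a s' n t htr hnb hcc ih =>
    intro δ σ hs
    cases δ with
    | nil =>
      simp only [List.nil_append] at hs
      subst hs
      exact Or.inl ⟨0, n + 1, by omega, CCPath.refl _, CCPath.stepNe htr hnb hcc⟩
    | cons A δ₁ =>
      subst hs
      obtain ⟨ρ, _, rfl⟩ := tr_shape (by simpa using htr)
      rcases ih (ρ ++ δ₁) σ (by simp) with ⟨k₁, k₂, hsum, p1, p2⟩ | hright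
      · exact Or.inl ⟨k₁ + 1, k₂, by omega, CCPath.stepNe htr hnb p1, p2⟩
      · exact Or.inr hright

theorem ccNorm_mono (hG : G.Normed) (δ σ : List V) :
    ccNorm G.tr τ σ ≤ ccNorm G.tr τ (δ ++ σ) := by
  apply le_sInf
  rintro b ⟨ℓ, rfl, u, p, si⟩
  rcases ccpath_decomp p δ σ rfl with ⟨k₁, k₂, hsum, _, p2⟩ | ⟨ζ, _, rfl⟩
  · exact le_trans (ccNorm_le p2 si) (Nat.cast_le.mpr (by omega))
  · obtain ⟨w, hw⟩ := normed_reach hG ζ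
    have hw' : Steps G.tr (ζ ++ σ) w σ := by simpa using steps_lift hw σ
    have siσ : SilentState G.tr τ σ := silent_steps hw' si
    exact le_trans (ccNorm_le (CCPath.refl σ) siσ) (by simp)

/-! ### Left-append congruence -/

def LiftRel (B : List V → List V → Prop) : List V → List V → Prop :=
  fun x y => ∃ η ζ ζ', x = η ++ ζ ∧ y = η ++ ζ' ∧ B ζ ζ'

theorem fwd_lift {B : List V → List V → Prop} (hF : FwdOK G.tr τ B) :
    FwdOK G.tr τ (LiftRel B) := by
  rintro x y ⟨η, ζ, ζ', rfl, rfl, hB⟩ a x' htr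
  cases η with
  | nil =>
    simp only [List.nil_append] at htr ⊢
    rcases hF ζ ζ' hB a x' htr with ⟨ha, hb⟩ | ⟨tk, t', seq, htk, ht'⟩
    · exact Or.inl ⟨ha, [], x', ζ', by simp, by simp, hb⟩
    · refine Or.inr ⟨tk, t', ?_, htk, [], x', t', by simp, by simp, ht'⟩
      exact TauSeq.mono (fun u v hb' => ⟨[], u, v, by simp, by simp, hb'⟩) seq
  | cons A η₁ =>
    obtain ⟨ρ, hr, rfl⟩ := tr_shape (by simpa using htr)
    refine Or.inr ⟨(A :: η₁) ++ ζ', ρ ++ (η₁ ++ ζ'), TauSeq.refl _,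
      ⟨A, ρ, η₁ ++ ζ', hr, by simp, rfl⟩, ?_⟩
    exact ⟨ρ ++ η₁, ζ, ζ', by simp, by simp, hB⟩

theorem bb_append_left (η : List V) {δ δ' : List V} (h : BBisim G.tr τ δ δ') :
    BBisim G.tr τ (η ++ δ) (η ++ δ') := by
  obtain ⟨B, hB, hb⟩ := h
  rw [isBB_iff] at hB
  refine ⟨LiftRel B, ?_, η, δ, δ', rfl, rfl, hb⟩
  rw [isBB_iff]
  refine ⟨fwd_lift hB.1, ?_⟩
  refine fwd_of_iff (B := LiftRel (Flip B)) ?_ (fwd_lift hB.2)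
  intro x y
  constructor
  · rintro ⟨η, ζ, ζ', hx, hy, hb'⟩
    exact ⟨η, ζ', ζ, hy, hx, hb'⟩
  · rintro ⟨η, ζ, ζ', hx, hy, hb'⟩
    exact ⟨η, ζ', ζ, hy, hx, hb'⟩

/-! ### The key "peel" lemma -/

theorem bb_peel (hG : G.Normed) {H : V} {α' γ : List V}
    (h : BBisim G.tr τ (H :: (α' ++ γ)) γ) : BBisim G.tr τ (α' ++ γ) γ := by
  set σ := α' ++ γ with hσ
  have hσs : ccNorm G.tr τ σ ≤ ccNorm G.tr τ (H :: σ) := by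
    simpa using ccNorm_mono (τ := τ) hG [H] σ
  have hγσ : ccNorm G.tr τ γ ≤ ccNorm G.tr τ σ := ccNorm_mono hG α' γ
  have hsγ : ccNorm G.tr τ (H :: σ) = ccNorm G.tr τ γ := ccNorm_congr h
  obtain ⟨ℓ, u, p, si, hval⟩ := ccNorm_attained (exists_ccpath_silent hG (H :: σ))
  have hσval : ccNorm G.tr τ σ = (ℓ : ℕ∞) := by
    refine le_antisymm (hval ▸ hσs) ?_
    calc (ℓ : ℕ∞) = ccNorm G.tr τ (H :: σ) := hval.symm
      _ = ccNorm G.tr τ γ := hsγ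
      _ ≤ ccNorm G.tr τ σ := hγσ
  rcases ccpath_decomp p [H] σ rfl with ⟨k₁, k₂, hsum, p1, p2⟩ | ⟨ζ, _, rfl⟩
  · have h2 : (ℓ : ℕ∞) ≤ (k₂ : ℕ∞) := hσval ▸ ccNorm_le p2 si
    have hk : ℓ ≤ k₂ := Nat.cast_le.mp h2
    have hk1 : k₁ = 0 := by omega
    subst hk1
    exact bb_trans (bb_symm (ccpath_zero_bb p1)) h
  · obtain ⟨w, hw⟩ := normed_reach hG ζ
    have hw' : Steps G.tr (ζ ++ σ) w σ := by simpa using steps_lift hw σ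
    have siσ : SilentState G.tr τ σ := silent_steps hw' si
    have hγ0 : ccNorm G.tr τ γ = 0 := by
      refine le_antisymm (le_trans hγσ ?_) zero_le
      exact le_trans (ccNorm_le (CCPath.refl σ) siσ) (by simp)
    obtain ⟨ℓγ, uγ, pγ, siγ, hγval⟩ := ccNorm_attained (exists_ccpath_silent hG γ)
    have hℓγ : ℓγ = 0 := by
      have : (ℓγ : ℕ∞) = 0 := hγval ▸ hγ0
      exact_mod_cast this
    subst hℓγ
    exact bb_symm (bb_trans (ccpath_zero_bb pγ) (silent_bb siγ siσ))

theorem bb_of_all (γ : List V) :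
    ∀ α : List V, (∀ X ∈ α, BBisim G.tr τ (X :: γ) γ) → BBisim G.tr τ (α ++ γ) γ := by
  intro α
  induction α with
  | nil => intro _; exact bb_refl γ
  | cons H α' ih =>
    intro hall
    have hH : BBisim G.tr τ (H :: γ) γ := hall H List.mem_cons_self
    have hrest : BBisim G.tr τ (α' ++ γ) γ :=
      ih (fun X hX => hall X (List.mem_cons_of_mem H hX))
    have hc : BBisim G.tr τ ([H] ++ (α' ++ γ)) ([H] ++ γ) := bb_append_left [H] hrest
    exact bb_trans hc hH

theorem all_of_bb (hG : G.Normed) (γ : List V) :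
    ∀ α : List V, BBisim G.tr τ (α ++ γ) γ → ∀ X ∈ α, BBisim G.tr τ (X :: γ) γ := by
  intro α
  induction α with
  | nil => intro _ X hX; exact absurd hX List.not_mem_nil
  | cons H α' ih =>
    intro h X hX
    have h' : BBisim G.tr τ (H :: (α' ++ γ)) γ := h
    have hpeel : BBisim G.tr τ (α' ++ γ) γ := bb_peel hG h'
    rcases List.mem_cons.mp hX with rfl | hmem
    · have hc : BBisim G.tr τ ([X] ++ (α' ++ γ)) ([X] ++ γ) := bb_append_left [X] hpeel
      exact bb_trans (bb_symm hc) h'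
    · exact ih hpeel X hmem

end BBAux

/-- Proposition 4.3(2): `αγ ~ γ` iff `α ∈ (R_γ)*`. -/
theorem bbisim_append_iff_redundant {V Act : Type} (G : BPA V Act) (τ : Act)
    (hG : G.Normed) (α γ : List V) :
    BBisim G.tr τ (α ++ γ) γ ↔ ∀ X ∈ α, X ∈ RedSet G τ γ := by
  constructor
  · intro h X hX
    exact BBAux.all_of_bb hG γ α h X hX
  · intro hall
    exact BBAux.bb_of_all γ α (fun X hX => hall X hX)
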